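/- Let d > k ≥ 0 and j ≥ 0 be integers, let m ≥ 2, and suppose (a_i)_{i≥2} are positive reals. Define for ρ > 0 the partition sum M_m(ρ) := Σ_{π} ∏_{B∈π} a_{|B|} ρ^{j|B| + d - k}, summing over set partitions of {1,…,m} with all blocks of size ≥ 2. Then for m even, lim_{ρ→∞} M_m(ρ)/ρ^{jm + m(d-k)/2} = (m-1)!! · a_2^{m/2}, and for m odd, lim_{ρ→∞} M_m(ρ)/ρ^{jm + ⌊m(d-k)/2⌋ } exists and equals C(m,3)(m-4)!! a_3 a_2^{(m-3)/2} when d - k is such that the floor term matches jm + (d-k)(m-1)/2 (in particular when d-k = 1 for the odd case). -/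
import Mathlib
open scoped Classical Nat
open Filter

/-! ### Limit lemmas -/

lemma tendsto_coeff_pow (c : ℝ) (e E : ℕ) (h : e ≤ E) :
    Tendsto (fun ρ : ℝ => c * ρ ^ e / ρ ^ E) atTop (nhds (if e = E then c else 0)) := by
  rcases eq_or_lt_of_le h with rfl | hlt
  · rw [if_pos rfl]
    refine Tendsto.congr' ?_ tendsto_const_nhds
    filter_upwards [eventually_gt_atTop (0 : ℝ)] with ρ hρ
    field_simp
  · rw [if_neg hlt.ne]
    have h0 : Tendsto (fun ρ : ℝ => c / ρ ^ (E - e)) atTop (nhds 0) :=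
      Tendsto.div_atTop tendsto_const_nhds (tendsto_pow_atTop (by omega))
    refine Tendsto.congr' ?_ h0
    filter_upwards [eventually_gt_atTop (0 : ℝ)] with ρ hρ
    rw [div_eq_div_iff (by positivity) (by positivity), mul_assoc, ← pow_add]
    congr 2
    omega

lemma tendsto_sum_div {ι : Type*} (S : Finset ι) (c : ι → ℝ) (e : ι → ℕ) (E : ℕ)
    (he : ∀ i ∈ S, e i ≤ E) :
    Tendsto (fun ρ : ℝ => (∑ i ∈ S, c i * ρ ^ e i) / ρ ^ E) atTop
      (nhds (∑ i ∈ S.filter (fun i => e i = E), c i)) := by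
  have hval : ∑ i ∈ S.filter (fun i => e i = E), c i
      = ∑ i ∈ S, if e i = E then c i else 0 := Finset.sum_filter _ _
  rw [hval]
  have h := tendsto_finset_sum S (fun i hi => tendsto_coeff_pow (c i) (e i) E (he i hi))
  refine h.congr (fun ρ => ?_)
  rw [Finset.sum_div]

section Matchings
variable {α : Type*} [Fintype α] [DecidableEq α]

/-- Partitions of `s` into blocks of size 2. -/
noncomputable def MSet (s : Finset α) : Finset (Finset (Finset α)) :=
  Finset.univ.filter (fun P => (∀ B ∈ P, B ⊆ s ∧ B.card = 2) ∧ ∀ x ∈ s, ∃! B, B ∈ P ∧ x ∈ B)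

lemma mem_MSet {s : Finset α} {P : Finset (Finset α)} :
    P ∈ MSet s ↔ (∀ B ∈ P, B ⊆ s ∧ B.card = 2) ∧ ∀ x ∈ s, ∃! B, B ∈ P ∧ x ∈ B := by
  simp [MSet]

lemma sum_card_of_cover {P : Finset (Finset α)} {s : Finset α}
    (hsub : ∀ B ∈ P, B ⊆ s) (hcov : ∀ x ∈ s, ∃! B, B ∈ P ∧ x ∈ B) :
    ∑ B ∈ P, B.card = s.card := by
  have hdisj : ∀ B ∈ P, ∀ B' ∈ P, B ≠ B' → Disjoint B B' := by
    intro B hB B' hB' hne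
    rw [Finset.disjoint_left]
    intro z hz hz'
    obtain ⟨C, -, hC⟩ := hcov z (hsub B hB hz)
    exact hne ((hC B ⟨hB, hz⟩).trans (hC B' ⟨hB', hz'⟩).symm)
  have hU : P.biUnion id = s := by
    ext z
    simp only [Finset.mem_biUnion, id]
    constructor
    · rintro ⟨B, hB, hz⟩; exact hsub B hB hz
    · intro hz; obtain ⟨B, ⟨hB, hzB⟩, -⟩ := hcov z hz; exact ⟨B, hB, hzB⟩
  rw [← hU]
  exact (Finset.card_biUnion hdisj).symm

lemma notmem_of_subset_sdiff {s C : Finset α} (hne : C.Nonempty) {Q : Finset (Finset α)}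
    (hQsub : ∀ B ∈ Q, B ⊆ s \ C) : C ∉ Q := by
  intro hC
  obtain ⟨z, hz⟩ := hne
  exact (Finset.mem_sdiff.1 (hQsub C hC hz)).2 hz

lemma cover_insert {s C : Finset α} {Q : Finset (Finset α)} (hCs : C ⊆ s)
    (hQsub : ∀ B ∈ Q, B ⊆ s \ C) (hQcov : ∀ x ∈ s \ C, ∃! B, B ∈ Q ∧ x ∈ B) :
    ∀ x ∈ s, ∃! B, B ∈ insert C Q ∧ x ∈ B := by
  intro x hx
  by_cases hxC : x ∈ C
  · refine ⟨C, ⟨Finset.mem_insert_self _ _, hxC⟩, ?_⟩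
    rintro B ⟨hB, hxB⟩
    rcases Finset.mem_insert.1 hB with rfl | hB
    · rfl
    · exact ((Finset.mem_sdiff.1 (hQsub B hB hxB)).2 hxC).elim
  · obtain ⟨B, ⟨hB, hxB⟩, hu⟩ := hQcov x (Finset.mem_sdiff.2 ⟨hx, hxC⟩)
    refine ⟨B, ⟨Finset.mem_insert_of_mem hB, hxB⟩, ?_⟩
    rintro B' ⟨hB', hxB'⟩
    rcases Finset.mem_insert.1 hB' with rfl | hB'
    · exact (hxC hxB').elim
    · exact hu B' ⟨hB', hxB'⟩

lemma erase_subset_sdiff {s : Finset α} {P : Finset (Finset α)}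
    (hsub : ∀ B ∈ P, B ⊆ s) (hcov : ∀ x ∈ s, ∃! B, B ∈ P ∧ x ∈ B)
    {C : Finset α} (hC : C ∈ P) :
    ∀ B ∈ P.erase C, B ⊆ s \ C := by
  intro B hB z hz
  have hBP := Finset.mem_of_mem_erase hB
  have hzs : z ∈ s := hsub B hBP hz
  refine Finset.mem_sdiff.2 ⟨hzs, fun hzC => ?_⟩
  obtain ⟨D, -, hu⟩ := hcov z hzs
  exact (Finset.ne_of_mem_erase hB) ((hu B ⟨hBP, hz⟩).trans (hu C ⟨hC, hzC⟩).symm)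

lemma cover_erase {s : Finset α} {P : Finset (Finset α)}
    (hsub : ∀ B ∈ P, B ⊆ s) (hcov : ∀ x ∈ s, ∃! B, B ∈ P ∧ x ∈ B)
    {C : Finset α} (hC : C ∈ P) :
    ∀ x ∈ s \ C, ∃! B, B ∈ P.erase C ∧ x ∈ B := by
  intro x hx
  obtain ⟨hxs, hxC⟩ := Finset.mem_sdiff.1 hx
  obtain ⟨B, ⟨hB, hxB⟩, hu⟩ := hcov x hxs
  have hBC : B ≠ C := fun h => hxC (h ▸ hxB)
  refine ⟨B, ⟨Finset.mem_erase.2 ⟨hBC, hB⟩, hxB⟩, ?_⟩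
  rintro B' ⟨hB', hxB'⟩
  exact hu B' ⟨Finset.mem_of_mem_erase hB', hxB'⟩

lemma mem_image_insert_iff {s C : Finset α} (hCs : C ⊆ s) (hCne : C.Nonempty)
    {P : Finset (Finset α)} :
    P ∈ (MSet (s \ C)).image (insert C) ↔
      (∀ B ∈ P, B ⊆ s) ∧ (∀ x ∈ s, ∃! B, B ∈ P ∧ x ∈ B) ∧ C ∈ P ∧
        ∀ B ∈ P.erase C, B.card = 2 := by
  constructor
  · intro h
    obtain ⟨Q, hQ, rfl⟩ := Finset.mem_image.1 h
    rw [mem_MSet] at hQ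
    obtain ⟨hQb, hQcov⟩ := hQ
    have hQsub : ∀ B ∈ Q, B ⊆ s \ C := fun B hB => (hQb B hB).1
    have hCQ : C ∉ Q := notmem_of_subset_sdiff hCne hQsub
    refine ⟨?_, cover_insert hCs hQsub hQcov, Finset.mem_insert_self _ _, ?_⟩
    · intro B hB
      rcases Finset.mem_insert.1 hB with rfl | hB
      · exact hCs
      · exact (hQsub B hB).trans Finset.sdiff_subset
    · intro B hB
      rw [Finset.erase_insert hCQ] at hB
      exact (hQb B hB).2
  · rintro ⟨hsub, hcov, hCP, h2⟩
    refine Finset.mem_image.2 ⟨P.erase C, ?_, Finset.insert_erase hCP⟩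
    rw [mem_MSet]
    exact ⟨fun B hB => ⟨erase_subset_sdiff hsub hcov hCP B hB, h2 B hB⟩,
      cover_erase hsub hcov hCP⟩

lemma card_image_insert {s C : Finset α} (hCne : C.Nonempty) :
    ((MSet (s \ C)).image (insert C)).card = (MSet (s \ C)).card := by
  refine Finset.card_image_of_injOn ?_
  intro Q hQ Q' hQ' h
  have hCQ : C ∉ Q := notmem_of_subset_sdiff hCne (fun B hB => ((mem_MSet.1 hQ).1 B hB).1)
  have hCQ' : C ∉ Q' := notmem_of_subset_sdiff hCne (fun B hB => ((mem_MSet.1 hQ').1 B hB).1)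
  rw [← Finset.erase_insert hCQ, h, Finset.erase_insert hCQ']

end Matchings

section Matchings2
variable {α : Type*} [Fintype α] [DecidableEq α]

lemma pair_subset {s : Finset α} {x y : α} (hx : x ∈ s) (hy : y ∈ s) :
    ({x, y} : Finset α) ⊆ s := by
  intro z hz
  rcases Finset.mem_insert.1 hz with rfl | hz
  · exact hx
  · rw [Finset.mem_singleton.1 hz]; exact hy

lemma MSet_eq_biUnion {s : Finset α} {x : α} (hx : x ∈ s) :
    MSet s = (s.erase x).biUnion (fun y => (MSet (s \ {x, y})).image (insert {x, y})) := by
  ext P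
  simp only [Finset.mem_biUnion]
  constructor
  · intro hP
    rw [mem_MSet] at hP
    obtain ⟨hb, hcov⟩ := hP
    obtain ⟨B, ⟨hBP, hxB⟩, -⟩ := hcov x hx
    obtain ⟨hBs, hB2⟩ := hb B hBP
    obtain ⟨y, hy⟩ := Finset.card_eq_one.1
      (by rw [Finset.card_erase_of_mem hxB, hB2] : (B.erase x).card = 1)
    have hyB : y ∈ B.erase x := hy ▸ Finset.mem_singleton_self y
    have hyx : y ≠ x := Finset.ne_of_mem_erase hyB
    have hBxy : B = {x, y} := by
      rw [← Finset.insert_erase hxB, hy]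
    have hys : y ∈ s := hBs (Finset.mem_of_mem_erase hyB)
    refine ⟨y, Finset.mem_erase.2 ⟨hyx, hys⟩, ?_⟩
    rw [mem_image_insert_iff (hBxy ▸ hBs) ⟨x, Finset.mem_insert_self x _⟩]
    refine ⟨fun B' hB' => (hb B' hB').1, hcov, hBxy ▸ hBP,
      fun B' hB' => (hb B' (Finset.mem_of_mem_erase hB')).2⟩
  · rintro ⟨y, hy, hP⟩
    have hys : y ∈ s := Finset.mem_of_mem_erase hy
    have hyx : y ≠ x := Finset.ne_of_mem_erase hy
    rw [mem_image_insert_iff (pair_subset hx hys) ⟨x, Finset.mem_insert_self x _⟩] at hP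
    obtain ⟨hsub, hcov, hCP, h2⟩ := hP
    rw [mem_MSet]
    refine ⟨fun B hB => ⟨hsub B hB, ?_⟩, hcov⟩
    by_cases hBC : B = ({x, y} : Finset α)
    · rw [hBC]; exact Finset.card_pair (Ne.symm hyx)
    · exact h2 B (Finset.mem_erase.2 ⟨hBC, hB⟩)

lemma MSet_empty : MSet (∅ : Finset α) = {∅} := by
  ext P
  rw [mem_MSet, Finset.mem_singleton]
  constructor
  · rintro ⟨hb, -⟩
    refine Finset.eq_empty_of_forall_notMem (fun B hB => ?_)
    obtain ⟨hsub, hcard⟩ := hb B hB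
    have : B = ∅ := Finset.subset_empty.1 hsub
    rw [this] at hcard
    simp at hcard
  · rintro rfl
    exact ⟨fun B hB => (Finset.notMem_empty _ hB).elim,
      fun z hz => (Finset.notMem_empty _ hz).elim⟩

lemma doubleFactorial_odd (n : ℕ) : (2 * n + 1)‼ = (2 * n + 1) * (2 * n - 1)‼ := by
  cases n with
  | zero => rfl
  | succ k =>
    have h1 : 2 * (k + 1) + 1 = (2 * k + 1) + 2 := by ring
    have h2 : 2 * (k + 1) - 1 = 2 * k + 1 := by omega
    rw [h1, h2, Nat.doubleFactorial_add_two]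

lemma card_MSet : ∀ (n : ℕ) (s : Finset α), s.card = 2 * n → (MSet s).card = (2 * n - 1)‼ := by
  intro n
  induction n with
  | zero =>
    intro s hs
    rw [Finset.card_eq_zero.1 hs, MSet_empty]
    rfl
  | succ n ih =>
    intro s hs
    have hne : s.Nonempty := Finset.card_pos.1 (by omega)
    obtain ⟨x, hx⟩ := hne
    rw [MSet_eq_biUnion hx]
    have hdisj : ∀ y ∈ s.erase x, ∀ y' ∈ s.erase x, y ≠ y' →
        Disjoint ((MSet (s \ {x, y})).image (insert {x, y}))
          ((MSet (s \ {x, y'})).image (insert {x, y'})) := by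
      intro y hy y' hy' hne'
      rw [Finset.disjoint_left]
      intro P hP hP'
      have hys : y ∈ s := Finset.mem_of_mem_erase hy
      have hy's : y' ∈ s := Finset.mem_of_mem_erase hy'
      rw [mem_image_insert_iff (pair_subset hx hys) ⟨x, Finset.mem_insert_self x _⟩] at hP
      rw [mem_image_insert_iff (pair_subset hx hy's) ⟨x, Finset.mem_insert_self x _⟩] at hP'
      obtain ⟨-, hcov, hCP, -⟩ := hP
      obtain ⟨-, -, hCP', -⟩ := hP'
      obtain ⟨B, -, hu⟩ := hcov x hx
      have h1 : ({x, y} : Finset α) = B := hu _ ⟨hCP, Finset.mem_insert_self x _⟩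
      have h2 : ({x, y'} : Finset α) = B := hu _ ⟨hCP', Finset.mem_insert_self x _⟩
      have : y' ∈ ({x, y} : Finset α) := by
        rw [h1, ← h2]
        exact Finset.mem_insert_of_mem (Finset.mem_singleton_self y')
      rcases Finset.mem_insert.1 this with h | h
      · exact Finset.ne_of_mem_erase hy' h
      · exact hne' (Finset.mem_singleton.1 h).symm
    rw [Finset.card_biUnion hdisj]
    have hterm : ∀ y ∈ s.erase x,
        ((MSet (s \ {x, y})).image (insert {x, y})).card = (2 * n - 1)‼ := by
      intro y hy
      rw [card_image_insert ⟨x, Finset.mem_insert_self x _⟩]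
      apply ih
      have hys : y ∈ s := Finset.mem_of_mem_erase hy
      have hyx : y ≠ x := Finset.ne_of_mem_erase hy
      rw [Finset.card_sdiff_of_subset (pair_subset hx hys), Finset.card_pair (Ne.symm hyx), hs]
      omega
    rw [Finset.sum_congr rfl hterm, Finset.sum_const, Finset.card_erase_of_mem hx, hs,
      smul_eq_mul]
    have : 2 * (n + 1) - 1 = 2 * n + 1 := by omega
    rw [this, doubleFactorial_odd]

end Matchings2

section Triples
variable {α : Type*} [Fintype α] [DecidableEq α]

/-- Partitions of `s` with one block of size 3 and the rest of size 2. -/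
noncomputable def TSet (s : Finset α) : Finset (Finset (Finset α)) :=
  Finset.univ.filter (fun P => (∀ B ∈ P, B ⊆ s) ∧ (∀ x ∈ s, ∃! B, B ∈ P ∧ x ∈ B) ∧
    ∃ C ∈ P, C.card = 3 ∧ ∀ B ∈ P.erase C, B.card = 2)

lemma mem_TSet {s : Finset α} {P : Finset (Finset α)} :
    P ∈ TSet s ↔ (∀ B ∈ P, B ⊆ s) ∧ (∀ x ∈ s, ∃! B, B ∈ P ∧ x ∈ B) ∧
      ∃ C ∈ P, C.card = 3 ∧ ∀ B ∈ P.erase C, B.card = 2 := by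
  simp [TSet]

lemma TSet_eq_biUnion (s : Finset α) :
    TSet s = (s.powersetCard 3).biUnion (fun C => (MSet (s \ C)).image (insert C)) := by
  ext P
  rw [mem_TSet, Finset.mem_biUnion]
  constructor
  · rintro ⟨hsub, hcov, C, hCP, hC3, h2⟩
    have hCs : C ⊆ s := hsub C hCP
    have hCne : C.Nonempty := Finset.card_pos.1 (by omega)
    exact ⟨C, Finset.mem_powersetCard.2 ⟨hCs, hC3⟩,
      (mem_image_insert_iff hCs hCne).2 ⟨hsub, hcov, hCP, h2⟩⟩
  · rintro ⟨C, hC, hP⟩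
    obtain ⟨hCs, hC3⟩ := Finset.mem_powersetCard.1 hC
    have hCne : C.Nonempty := Finset.card_pos.1 (by omega)
    obtain ⟨hsub, hcov, hCP, h2⟩ := (mem_image_insert_iff hCs hCne).1 hP
    exact ⟨hsub, hcov, C, hCP, hC3, h2⟩

lemma card_TSet {s : Finset α} {n : ℕ} (hs : s.card = 2 * n + 3) :
    (TSet s).card = s.card.choose 3 * (2 * n - 1)‼ := by
  rw [TSet_eq_biUnion]
  have hdisj : ∀ C ∈ s.powersetCard 3, ∀ C' ∈ s.powersetCard 3, C ≠ C' →
      Disjoint ((MSet (s \ C)).image (insert C)) ((MSet (s \ C')).image (insert C')) := by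
    intro C hC C' hC' hne
    obtain ⟨hCs, hC3⟩ := Finset.mem_powersetCard.1 hC
    obtain ⟨hC's, hC'3⟩ := Finset.mem_powersetCard.1 hC'
    rw [Finset.disjoint_left]
    intro P hP hP'
    obtain ⟨Q, hQ, rfl⟩ := Finset.mem_image.1 hP
    obtain ⟨-, -, hC'P, h2⟩ :=
      (mem_image_insert_iff hC's (Finset.card_pos.1 (by omega))).1 hP'
    rcases Finset.mem_insert.1 hC'P with h | h
    · exact hne h.symm
    · have := ((mem_MSet.1 hQ).1 C' h).2
      omega
  rw [Finset.card_biUnion hdisj]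
  have hterm : ∀ C ∈ s.powersetCard 3,
      ((MSet (s \ C)).image (insert C)).card = (2 * n - 1)‼ := by
    intro C hC
    obtain ⟨hCs, hC3⟩ := Finset.mem_powersetCard.1 hC
    rw [card_image_insert (Finset.card_pos.1 (by omega))]
    apply card_MSet
    rw [Finset.card_sdiff_of_subset hCs, hC3, hs]
    omega
  rw [Finset.sum_congr rfl hterm, Finset.sum_const, Finset.card_powersetCard, smul_eq_mul]

end Triples

section Counting
variable {β : Type*} [DecidableEq β]

lemma all_eq_two {Q : Finset (Finset β)} (h2 : ∀ B ∈ Q, 2 ≤ B.card)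
    (hsum : ∑ B ∈ Q, B.card ≤ 2 * Q.card) : ∀ B ∈ Q, B.card = 2 := by
  classical
  intro B hB
  by_contra hne
  have h3 : 3 ≤ B.card := by have := h2 B hB; omega
  have hle : (Q.erase B).card • 2 ≤ ∑ B' ∈ Q.erase B, B'.card :=
    Finset.card_nsmul_le_sum _ _ _ (fun B' hB' => h2 B' (Finset.mem_of_mem_erase hB'))
  have hsplit : B.card + ∑ B' ∈ Q.erase B, B'.card = ∑ B' ∈ Q, B'.card :=
    Finset.add_sum_erase Q _ hB
  have hc : (Q.erase B).card = Q.card - 1 := Finset.card_erase_of_mem hB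
  have hQpos : 1 ≤ Q.card := Finset.card_pos.2 ⟨B, hB⟩
  simp only [smul_eq_mul] at hle
  omega

lemma exists_three {Q : Finset (Finset β)} (h2 : ∀ B ∈ Q, 2 ≤ B.card)
    (hsum : ∑ B ∈ Q, B.card = 2 * Q.card + 1) :
    ∃ C ∈ Q, C.card = 3 ∧ ∀ B ∈ Q.erase C, B.card = 2 := by
  classical
  have hex : ∃ C ∈ Q, C.card ≠ 2 := by
    by_contra h
    push_neg at h
    have : ∑ B ∈ Q, B.card = 2 * Q.card := by
      rw [Finset.sum_congr rfl h, Finset.sum_const, smul_eq_mul]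
      ring
    omega
  obtain ⟨C, hCQ, hC2⟩ := hex
  have hC3 : 3 ≤ C.card := by have := h2 C hCQ; omega
  have hle : (Q.erase C).card • 2 ≤ ∑ B' ∈ Q.erase C, B'.card :=
    Finset.card_nsmul_le_sum _ _ _ (fun B' hB' => h2 B' (Finset.mem_of_mem_erase hB'))
  have hsplit : C.card + ∑ B' ∈ Q.erase C, B'.card = ∑ B' ∈ Q, B'.card :=
    Finset.add_sum_erase Q _ hCQ
  have hc : (Q.erase C).card = Q.card - 1 := Finset.card_erase_of_mem hCQ
  have hQpos : 1 ≤ Q.card := Finset.card_pos.2 ⟨C, hCQ⟩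
  simp only [smul_eq_mul] at hle
  have hC3' : C.card = 3 := by omega
  refine ⟨C, hCQ, hC3', all_eq_two (fun B hB => h2 B (Finset.mem_of_mem_erase hB)) ?_⟩
  omega

end Counting

section MoreHelpers
variable {α : Type*} [Fintype α] [DecidableEq α]

lemma MSet_card_blocks {s : Finset α} {P : Finset (Finset α)} (hP : P ∈ MSet s) :
    2 * P.card = s.card := by
  obtain ⟨hb, hcov⟩ := mem_MSet.1 hP
  have h1 := sum_card_of_cover (fun B hB => (hb B hB).1) hcov
  have h2 : ∑ B ∈ P, B.card = 2 * P.card := by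
    rw [Finset.sum_congr rfl (fun B hB => (hb B hB).2), Finset.sum_const, smul_eq_mul]; ring
  omega

lemma MSet_prod (a : ℕ → ℝ) {s : Finset α} {P : Finset (Finset α)} (hP : P ∈ MSet s) :
    ∏ B ∈ P, a B.card = a 2 ^ (s.card / 2) := by
  obtain ⟨hb, hcov⟩ := mem_MSet.1 hP
  rw [Finset.prod_congr rfl (fun B hB => by rw [(hb B hB).2]), Finset.prod_const]
  have := MSet_card_blocks hP
  congr 1
  omega

lemma TSet_props {s : Finset α} {P : Finset (Finset α)} (hP : P ∈ TSet s) :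
    (∀ B ∈ P, 2 ≤ B.card) ∧ 2 * P.card + 1 = s.card := by
  obtain ⟨hsub, hcov, C, hCP, hC3, h2⟩ := mem_TSet.1 hP
  have h1 := sum_card_of_cover hsub hcov
  have hsplit : C.card + ∑ B ∈ P.erase C, B.card = ∑ B ∈ P, B.card :=
    Finset.add_sum_erase _ _ hCP
  have herase : ∑ B ∈ P.erase C, B.card = 2 * (P.erase C).card := by
    rw [Finset.sum_congr rfl h2, Finset.sum_const, smul_eq_mul]; ring
  have hc := Finset.card_erase_of_mem hCP
  have hpos : 1 ≤ P.card := Finset.card_pos.2 ⟨C, hCP⟩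
  constructor
  · intro B hB
    by_cases hBC : B = C
    · rw [hBC]; omega
    · have := h2 B (Finset.mem_erase.2 ⟨hBC, hB⟩); omega
  · omega

lemma TSet_prod (a : ℕ → ℝ) {s : Finset α} {P : Finset (Finset α)} (hP : P ∈ TSet s) :
    ∏ B ∈ P, a B.card = a 3 * a 2 ^ ((s.card - 3) / 2) := by
  obtain ⟨hsub, hcov, C, hCP, hC3, h2⟩ := mem_TSet.1 hP
  rw [← Finset.mul_prod_erase _ _ hCP, hC3]
  congr 1
  rw [Finset.prod_congr rfl (fun B hB => by rw [h2 B hB]), Finset.prod_const]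
  congr 1
  have h1 := sum_card_of_cover hsub hcov
  have hsplit : C.card + ∑ B ∈ P.erase C, B.card = ∑ B ∈ P, B.card :=
    Finset.add_sum_erase _ _ hCP
  have herase : ∑ B ∈ P.erase C, B.card = 2 * (P.erase C).card := by
    rw [Finset.sum_congr rfl h2, Finset.sum_const, smul_eq_mul]; ring
  omega

end MoreHelpers

def IsPartitionGe2 {m : ℕ} (P : Finset (Finset (Fin m))) : Prop :=
  (∀ B ∈ P, 2 ≤ B.card) ∧ ∀ x : Fin m, ∃! B, B ∈ P ∧ x ∈ B

/-- The weighted partition sum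
`M_m(ρ) = Σ_π Π_{B∈π} a_{|B|} ρ^{j|B| + dk}` over set partitions of `{1,…,m}`
with all blocks of size at least `2`. -/
noncomputable def partSum (a : ℕ → ℝ) (j dk m : ℕ) (ρ : ℝ) : ℝ :=
  ∑ P ∈ Finset.univ.filter (fun P : Finset (Finset (Fin m)) => IsPartitionGe2 P),
    ∏ B ∈ P, a B.card * ρ ^ (j * B.card + dk)

theorem partSum_asymptotics (d k j m : ℕ) (hdk : k < d) (hm : 2 ≤ m)
    (a : ℕ → ℝ) (ha : ∀ i, 2 ≤ i → 0 < a i) :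
    (Even m →
      Tendsto (fun ρ : ℝ => partSum a j (d - k) m ρ / ρ ^ (j * m + m * (d - k) / 2))
        atTop (nhds (((m - 1)‼ : ℝ) * a 2 ^ (m / 2)))) ∧
    (Odd m → d - k = 1 →
      Tendsto (fun ρ : ℝ => partSum a j (d - k) m ρ / ρ ^ (j * m + m * (d - k) / 2))
        atTop (nhds ((m.choose 3 : ℝ) * ((m - 4)‼ : ℝ) * a 3 * a 2 ^ ((m - 3) / 2)))) := by
  have hmuniv : (Finset.univ : Finset (Fin m)).card = m := by
    rw [Finset.card_univ, Fintype.card_fin]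
  set F := Finset.univ.filter (fun P : Finset (Finset (Fin m)) => IsPartitionGe2 P) with hF
  have hFmem : ∀ P : Finset (Finset (Fin m)), P ∈ F ↔ IsPartitionGe2 P := by
    intro P; simp [hF]
  have hsumcard : ∀ P : Finset (Finset (Fin m)), IsPartitionGe2 P → ∑ B ∈ P, B.card = m := by
    intro P hP
    have := sum_card_of_cover (s := (Finset.univ : Finset (Fin m)))
      (fun B _ => B.subset_univ) (fun x _ => hP.2 x)
    rw [hmuniv] at this
    exact this
  have hcardle : ∀ P : Finset (Finset (Fin m)), IsPartitionGe2 P → 2 * P.card ≤ m := by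
    intro P hP
    have h := Finset.card_nsmul_le_sum P (fun B => B.card) 2 (fun B hB => hP.1 B hB)
    rw [hsumcard P hP, smul_eq_mul] at h
    omega
  have hps : ∀ ρ : ℝ, partSum a j (d - k) m ρ
      = ∑ P ∈ F, (∏ B ∈ P, a B.card) * ρ ^ (j * m + (d - k) * P.card) := by
    intro ρ
    unfold partSum
    refine Finset.sum_congr rfl (fun P hP => ?_)
    have hP' : IsPartitionGe2 P := (hFmem P).1 hP
    have he : ∑ B ∈ P, (j * B.card + (d - k)) = j * m + (d - k) * P.card := by
      rw [Finset.sum_add_distrib, ← Finset.mul_sum, hsumcard P hP', Finset.sum_const,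
        smul_eq_mul]
      ring
    rw [Finset.prod_mul_distrib, Finset.prod_pow_eq_pow_sum, he]
  constructor
  · -- Even case
    intro hmE
    have hm2 : m % 2 = 0 := Nat.even_iff.1 hmE
    have hE : j * m + m * (d - k) / 2 = j * m + (d - k) * (m / 2) := by
      obtain ⟨t, ht⟩ := hmE
      subst ht
      have h1 : (t + t) * (d - k) = 2 * (t * (d - k)) := by ring
      have h2 : (t + t) / 2 = t := by omega
      rw [h1, h2, Nat.mul_div_cancel_left _ (by norm_num : 0 < 2)]
      ring
    have he : ∀ P ∈ F, j * m + (d - k) * P.card ≤ j * m + m * (d - k) / 2 := by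
      intro P hP
      have hP' := (hFmem P).1 hP
      have h1 := hcardle P hP'
      rw [hE]
      have : P.card ≤ m / 2 := by omega
      exact Nat.add_le_add_left (Nat.mul_le_mul_left _ this) _
    have hset : F.filter (fun P => j * m + (d - k) * P.card = j * m + m * (d - k) / 2)
        = MSet (Finset.univ : Finset (Fin m)) := by
      ext P
      rw [Finset.mem_filter]
      constructor
      · rintro ⟨hPF, hPe⟩
        have hP := (hFmem P).1 hPF
        rw [hE] at hPe
        have h1 : (d - k) * P.card = (d - k) * (m / 2) := Nat.add_left_cancel hPe
        have hcard : P.card = m / 2 := Nat.eq_of_mul_eq_mul_left (by omega) h1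
        have hall : ∀ B ∈ P, B.card = 2 :=
          all_eq_two hP.1 (by rw [hsumcard P hP]; omega)
        exact mem_MSet.2 ⟨fun B hB => ⟨B.subset_univ, hall B hB⟩, fun x _ => hP.2 x⟩
      · intro hPM
        obtain ⟨hb, hcov⟩ := mem_MSet.1 hPM
        have hP : IsPartitionGe2 P :=
          ⟨fun B hB => le_of_eq (hb B hB).2.symm, fun x => hcov x (Finset.mem_univ x)⟩
        have h2c : 2 * P.card = m := by
          have := MSet_card_blocks hPM
          omega
        refine ⟨(hFmem P).2 hP, ?_⟩
        rw [hE]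
        congr 2
        omega
    have hcard : (MSet (Finset.univ : Finset (Fin m))).card = (m - 1)‼ := by
      rw [card_MSet (m / 2) _ (by rw [hmuniv]; omega)]
      congr 1
      omega
    have hval : ∑ P ∈ F.filter (fun P => j * m + (d - k) * P.card = j * m + m * (d - k) / 2),
        ∏ B ∈ P, a B.card = ((m - 1)‼ : ℝ) * a 2 ^ (m / 2) := by
      rw [hset]
      rw [Finset.sum_congr rfl (fun P hP => MSet_prod a hP)]
      rw [Finset.sum_const, hcard, hmuniv, nsmul_eq_mul]
    have hlim := tendsto_sum_div F (fun P => ∏ B ∈ P, a B.card)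
      (fun P => j * m + (d - k) * P.card) (j * m + m * (d - k) / 2) he
    rw [hval] at hlim
    exact hlim.congr (fun ρ => by rw [← hps ρ])
  · -- Odd case
    intro hmO hdk1
    have hm2 : m % 2 = 1 := Nat.odd_iff.1 hmO
    rw [hdk1] at hps ⊢
    have he : ∀ P ∈ F, j * m + 1 * P.card ≤ j * m + m * 1 / 2 := by
      intro P hP
      have := hcardle P ((hFmem P).1 hP)
      omega
    have hset : F.filter (fun P => j * m + 1 * P.card = j * m + m * 1 / 2)
        = TSet (Finset.univ : Finset (Fin m)) := by
      ext P
      rw [Finset.mem_filter]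
      constructor
      · rintro ⟨hPF, hPe⟩
        have hP := (hFmem P).1 hPF
        have hcard : 2 * P.card + 1 = m := by omega
        obtain ⟨C, hCP, hC3, h2⟩ := exists_three hP.1 (by rw [hsumcard P hP]; omega)
        exact mem_TSet.2 ⟨fun B hB => B.subset_univ, fun x _ => hP.2 x, C, hCP, hC3, h2⟩
      · intro hPT
        obtain ⟨h2, hcard⟩ := TSet_props hPT
        rw [hmuniv] at hcard
        obtain ⟨hsub, hcov, -⟩ := mem_TSet.1 hPT
        exact ⟨(hFmem P).2 ⟨h2, fun x => hcov x (Finset.mem_univ x)⟩, by omega⟩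
    have hcard : (TSet (Finset.univ : Finset (Fin m))).card = m.choose 3 * (m - 4)‼ := by
      have h3 : (Finset.univ : Finset (Fin m)).card = 2 * ((m - 3) / 2) + 3 := by
        rw [hmuniv]; omega
      rw [card_TSet h3, hmuniv]
      congr 2
      omega
    have hval : ∑ P ∈ F.filter (fun P => j * m + 1 * P.card = j * m + m * 1 / 2),
        ∏ B ∈ P, a B.card
        = (m.choose 3 : ℝ) * ((m - 4)‼ : ℝ) * a 3 * a 2 ^ ((m - 3) / 2) := by
      rw [hset]
      rw [Finset.sum_congr rfl (fun P hP => TSet_prod a hP)]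
      rw [Finset.sum_const, hcard, hmuniv, nsmul_eq_mul]
      push_cast
      ring
    have hlim := tendsto_sum_div F (fun P => ∏ B ∈ P, a B.card)
      (fun P => j * m + 1 * P.card) (j * m + m * 1 / 2) he
    rw [hval] at hlim
    exact hlim.congr (fun ρ => by rw [← hps ρ])
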